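/- Let ρ > 0, T > 0, m₀ ≥ 0 and consider the closed curve of total length 4πρ formed by four half circles of radius ρ (two in planes {x₃=±ρ} centered on the x₃-axis, two in planes {x₂=±ρ} centered on the x₂-axis), traversed with constant speed 4πρ/T. If a loop v_I travels this curve with constant speed, satisfies |v_I(t)| = √2 ρ for all t, and the mutual distances satisfy |(R−I)v_I(t)| ≥ 2ρ for all R in the Klein group minus identity, then its Lagrangian action satisfies A(v_I) ≤ 32π²ρ²/T + (3+2√2 m₀)T/ρ; moreover the choice ρ = ((3+2√2 m₀)T²/(64π²))^{1/3} yields A(v_I) ≤ 6π^{2/3}(3+2√2 m₀)^{2/3}T^{1/3}. -/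

import Mathlib

open Real intervalIntegral

/-- Euclidean norm on `ℝ³` (as `Fin 3 → ℝ`). -/
noncomputable def norm3 (x : Fin 3 → ℝ) : ℝ := Real.sqrt (x 0 ^ 2 + x 1 ^ 2 + x 2 ^ 2)

/-- Rotation by π around the x₁-axis. -/
def KR₂ : Matrix (Fin 3) (Fin 3) ℝ := !![1, 0, 0; 0, -1, 0; 0, 0, -1]

/-- Rotation by π around the x₂-axis. -/
def KR₃ : Matrix (Fin 3) (Fin 3) ℝ := !![-1, 0, 0; 0, 1, 0; 0, 0, -1]

/-- Rotation by π around the x₃-axis. -/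
def KR₄ : Matrix (Fin 3) (Fin 3) ℝ := !![-1, 0, 0; 0, -1, 0; 0, 0, 1]

/-- Action estimate for the test loop of the Klein-group symmetric (1+4)-body problem:
a loop travelling with constant speed `4πρ/T` on the union of the four half circles, with
`|v_I(t)| = √2 ρ` and `|(R−I)v_I(t)| ≥ 2ρ` for every nontrivial `R` in the Klein group,
has action at most `32π²ρ²/T + (3+2√2 m₀)T/ρ`; moreover, for
`ρ = ((3+2√2 m₀)T²/(64π²))^{1/3}` the action is at most
`6π^{2/3}(3+2√2 m₀)^{2/3}T^{1/3}`. -/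
lemma continuous_norm3 : Continuous norm3 := by
  unfold norm3
  fun_prop

lemma norm3_nonneg (x : Fin 3 → ℝ) : 0 ≤ norm3 x := Real.sqrt_nonneg _

theorem klein_test_loop_action_bound (ρ T m₀ : ℝ) (hρ : 0 < ρ) (hT : 0 < T) (hm : 0 ≤ m₀)
    (v v' : ℝ → Fin 3 → ℝ)
    (hderiv : ∀ t, HasDerivAt v (v' t) t)
    (hspeed : ∀ t, norm3 (v' t) = 4 * π * ρ / T)
    (hnorm : ∀ t, norm3 (v t) = Real.sqrt 2 * ρ)
    (hdist : ∀ t, ∀ R ∈ ({KR₂, KR₃, KR₄} : Finset (Matrix (Fin 3) (Fin 3) ℝ)),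
      2 * ρ ≤ norm3 (R.mulVec (v t) - v t)) :
    (4 * ∫ t in (0 : ℝ)..T,
        (norm3 (v' t) ^ 2 / 2 + m₀ / norm3 (v t) +
          (1 / 2) * ∑ R ∈ ({KR₂, KR₃, KR₄} : Finset (Matrix (Fin 3) (Fin 3) ℝ)),
            1 / norm3 (R.mulVec (v t) - v t)))
      ≤ 32 * π ^ 2 * ρ ^ 2 / T + (3 + 2 * Real.sqrt 2 * m₀) * T / ρ ∧
    (ρ = ((3 + 2 * Real.sqrt 2 * m₀) * T ^ 2 / (64 * π ^ 2)) ^ ((1 : ℝ) / 3) →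
      (4 * ∫ t in (0 : ℝ)..T,
          (norm3 (v' t) ^ 2 / 2 + m₀ / norm3 (v t) +
            (1 / 2) * ∑ R ∈ ({KR₂, KR₃, KR₄} : Finset (Matrix (Fin 3) (Fin 3) ℝ)),
              1 / norm3 (R.mulVec (v t) - v t)))
        ≤ 6 * π ^ ((2 : ℝ) / 3) * (3 + 2 * Real.sqrt 2 * m₀) ^ ((2 : ℝ) / 3) *
            T ^ ((1 : ℝ) / 3)) := by
  have hπ : (0 : ℝ) < π := Real.pi_pos
  have hs2 : (0 : ℝ) < Real.sqrt 2 := by positivity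
  have h2 : Real.sqrt 2 * Real.sqrt 2 = 2 := Real.mul_self_sqrt (by norm_num)
  set S : Finset (Matrix (Fin 3) (Fin 3) ℝ) := {KR₂, KR₃, KR₄} with hS
  set g : ℝ → ℝ := fun t =>
    (4 * π * ρ / T) ^ 2 / 2 + m₀ / (Real.sqrt 2 * ρ) +
      (1 / 2) * ∑ R ∈ S, 1 / norm3 (R.mulVec (v t) - v t) with hg
  set K : ℝ := (4 * π * ρ / T) ^ 2 / 2 + m₀ / (Real.sqrt 2 * ρ) + 3 / (4 * ρ) with hK
  have hpos : ∀ t, ∀ R ∈ S, 0 < norm3 (R.mulVec (v t) - v t) := fun t R hR =>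
    lt_of_lt_of_le (by positivity) (hdist t R hR)
  -- rewrite the integrand
  have hfg : (∫ t in (0 : ℝ)..T,
      (norm3 (v' t) ^ 2 / 2 + m₀ / norm3 (v t) +
        (1 / 2) * ∑ R ∈ S, 1 / norm3 (R.mulVec (v t) - v t))) = ∫ t in (0 : ℝ)..T, g t := by
    refine intervalIntegral.integral_congr fun t _ => ?_
    simp only [hg, hspeed, hnorm]
  -- continuity of g
  have hvcont : Continuous v := by
    rw [continuous_iff_continuousAt]; exact fun t => (hderiv t).continuousAt
  have hgcont : Continuous g := by
    refine Continuous.add continuous_const (Continuous.mul continuous_const ?_)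
    refine continuous_finset_sum _ fun R hR => ?_
    refine Continuous.div continuous_const ?_ fun t => (hpos t R hR).ne'
    have hmv : Continuous fun t => R.mulVec (v t) := by
      exact
        (LinearMap.continuous_of_finiteDimensional R.mulVecLin).comp hvcont
    exact continuous_norm3.comp (hmv.sub hvcont)
  have hInt : IntervalIntegrable g MeasureTheory.volume 0 T := hgcont.intervalIntegrable _ _
  -- pointwise bound g ≤ K
  have hcard : S.card ≤ 3 := by
    refine le_trans (Finset.card_insert_le _ _) ?_
    have := Finset.card_insert_le KR₃ ({KR₄} : Finset (Matrix (Fin 3) (Fin 3) ℝ))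
    simp at this ⊢
    omega
  have hgK : ∀ t, g t ≤ K := by
    intro t
    have hsum : ∑ R ∈ S, 1 / norm3 (R.mulVec (v t) - v t) ≤ 3 / (2 * ρ) := by
      calc ∑ R ∈ S, 1 / norm3 (R.mulVec (v t) - v t)
          ≤ ∑ _R ∈ S, 1 / (2 * ρ) := by
            refine Finset.sum_le_sum fun R hR => ?_
            exact one_div_le_one_div_of_le (by positivity) (hdist t R hR)
        _ = S.card * (1 / (2 * ρ)) := by rw [Finset.sum_const, nsmul_eq_mul]
        _ ≤ 3 * (1 / (2 * ρ)) := by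
            have : (S.card : ℝ) ≤ 3 := by exact_mod_cast hcard
            have h1 : 0 ≤ 1 / (2 * ρ) := by positivity
            nlinarith
        _ = 3 / (2 * ρ) := by ring
    have h34 : 3 / (4 * ρ) = (1 / 2) * (3 / (2 * ρ)) := by ring
    have : (1 : ℝ) / 2 * ∑ R ∈ S, 1 / norm3 (R.mulVec (v t) - v t) ≤ 3 / (4 * ρ) := by
      rw [h34]; linarith
    simp only [hg, hK]
    linarith
  -- integral bound
  have hint_le : (∫ t in (0 : ℝ)..T, g t) ≤ T * K := by
    calc (∫ t in (0 : ℝ)..T, g t) ≤ ∫ _t in (0 : ℝ)..T, K :=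
          intervalIntegral.integral_mono_on (le_of_lt hT) hInt
            (_root_.intervalIntegrable_const) (fun t _ => hgK t)
      _ = T * K := by simp [intervalIntegral.integral_const]
  have hmain : (4 : ℝ) * ∫ t in (0 : ℝ)..T, g t
      ≤ 32 * π ^ 2 * ρ ^ 2 / T + (3 + 2 * Real.sqrt 2 * m₀) * T / ρ := by
    have h4 : (4 : ℝ) * ∫ t in (0 : ℝ)..T, g t ≤ 4 * (T * K) := by linarith
    refine h4.trans (le_of_eq ?_)
    have hs : m₀ / (Real.sqrt 2 * ρ) = Real.sqrt 2 * m₀ / (2 * ρ) := by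
      rw [div_eq_div_iff (by positivity) (by positivity)]
      linear_combination (-(m₀ * ρ)) * h2
    rw [hK, hs]
    field_simp
    ring_nf
  constructor
  · rw [hfg]; exact hmain
  · intro hρeq
    rw [hfg]
    refine hmain.trans (le_of_eq ?_)
    set c : ℝ := 3 + 2 * Real.sqrt 2 * m₀ with hc
    have hcpos : (0 : ℝ) < c := by positivity
    have hbase : (0 : ℝ) ≤ c * T ^ 2 / (64 * π ^ 2) := by positivity
    have hρ3 : ρ ^ 3 = c * T ^ 2 / (64 * π ^ 2) := by
      rw [hρeq, ← Real.rpow_natCast (_ ^ ((1:ℝ)/3)) 3, ← Real.rpow_mul hbase]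
      norm_num
    have hc2 : c = 64 * π ^ 2 * ρ ^ 3 / T ^ 2 := by
      rw [hρ3]; field_simp
    have hL : 32 * π ^ 2 * ρ ^ 2 / T + c * T / ρ = 96 * π ^ 2 * ρ ^ 2 / T := by
      rw [hc2]; field_simp; ring
    rw [hL]
    have e1 : (π ^ ((2:ℝ)/3)) ^ (3:ℕ) = π ^ 2 := by
      rw [← Real.rpow_natCast (π ^ ((2:ℝ)/3)) 3, ← Real.rpow_mul hπ.le]
      norm_num
    have e2 : (c ^ ((2:ℝ)/3)) ^ (3:ℕ) = c ^ 2 := by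
      rw [← Real.rpow_natCast (c ^ ((2:ℝ)/3)) 3, ← Real.rpow_mul hcpos.le]
      norm_num
    have e3 : (T ^ ((1:ℝ)/3)) ^ (3:ℕ) = T := by
      rw [← Real.rpow_natCast (T ^ ((1:ℝ)/3)) 3, ← Real.rpow_mul hT.le]
      norm_num
    have hcube : (96 * π ^ 2 * ρ ^ 2 / T) ^ (3:ℕ)
        = (6 * π ^ ((2:ℝ)/3) * c ^ ((2:ℝ)/3) * T ^ ((1:ℝ)/3)) ^ (3:ℕ) := by
      have : (96 * π ^ 2 * ρ ^ 2 / T) ^ (3:ℕ) = 96 ^ 3 * π ^ 6 * (ρ ^ 3) ^ 2 / T ^ 3 := by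
        field_simp
      rw [this, hρ3]
      rw [show (6 * π ^ ((2:ℝ)/3) * c ^ ((2:ℝ)/3) * T ^ ((1:ℝ)/3)) ^ (3:ℕ)
          = 6 ^ 3 * (π ^ ((2:ℝ)/3)) ^ (3:ℕ) * (c ^ ((2:ℝ)/3)) ^ (3:ℕ) * (T ^ ((1:ℝ)/3)) ^ (3:ℕ)
          by ring]
      rw [e1, e2, e3]
      field_simp
      ring
    have hLpos : (0 : ℝ) ≤ 96 * π ^ 2 * ρ ^ 2 / T := by positivity
    have hRpos : (0 : ℝ) ≤ 6 * π ^ ((2:ℝ)/3) * c ^ ((2:ℝ)/3) * T ^ ((1:ℝ)/3) := by positivity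
    exact (pow_left_inj₀ hLpos hRpos (by norm_num)).mp hcube
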